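/- Let G_1, …, G_n be invertible real symmetric k×k matrices such that Ḡ = Σ_{i=1}^n G_i^{−1} is invertible. Let Θ = {(μ_1, …, μ_n) ∈ (ℝ^k)^n : μ_1 + ⋯ + μ_n = 0} and let χ be the quadratic form χ(μ) = Σ_{i=1}^n μ_iᵀ G_i μ_i. Then the restriction of χ to Θ is nondegenerate and its index equals Σ_{i=1}^n ind(G_i) − ind(Ḡ). -/

import Mathlib

open Matrix BigOperators

/-- The index of a quadratic form `q` on a subspace `W`: the maximal dimension of a
subspace of `W` on which `q` is negative definite. -/
noncomputable def negIndexOn {V : Type*} [AddCommGroup V] [Module ℝ V]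
    (W : Submodule ℝ V) (q : V → ℝ) : ℕ :=
  sSup {d : ℕ | ∃ U : Submodule ℝ V, U ≤ W ∧ Module.finrank ℝ U = d ∧
    ∀ x ∈ U, x ≠ 0 → q x < 0}

/-- The (Morse) index of a real symmetric matrix: the number of its negative
eigenvalues counted with multiplicity, equivalently the maximal dimension of a
subspace on which the associated quadratic form is negative definite. -/
noncomputable def matIndex {N : Type*} [Fintype N] (Q : Matrix N N ℝ) : ℕ :=
  negIndexOn (⊤ : Submodule ℝ (N → ℝ)) (fun x => x ⬝ᵥ Q *ᵥ x)

/-- The subspace `Θ = {μ : μ_1 + ⋯ + μ_n = 0}`. -/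
def thetaSub (n k : ℕ) : Submodule ℝ (Fin n → Fin k → ℝ) where
  carrier := {μ | ∑ i : Fin n, μ i = 0}
  add_mem' := by
    intro a b ha hb
    simp only [Set.mem_setOf_eq] at *
    simp [Finset.sum_add_distrib, ha, hb]
  zero_mem' := by simp
  smul_mem' := by
    intro c a ha
    simp only [Set.mem_setOf_eq] at *
    simp [← Finset.smul_sum, ha]

section Helpers

open Module

variable {V : Type*} [AddCommGroup V] [Module ℝ V]

lemma quad_sum (B : V →ₗ[ℝ] V →ₗ[ℝ] ℝ) {ι : Type*} [Fintype ι] (v : ι → V)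
    (horth : ∀ i j, i ≠ j → B (v i) (v j) = 0) (c : ι → ℝ) :
    B (∑ i, c i • v i) (∑ i, c i • v i) = ∑ i, c i * c i * B (v i) (v i) := by
  have h1 : ∀ i, B (v i) (∑ j, c j • v j) = c i * B (v i) (v i) := by
    intro i
    rw [map_sum, Finset.sum_eq_single i]
    · simp
    · intro j _ hj
      simp [horth i j (Ne.symm hj)]
    · simp
  have h2 : B (∑ i, c i • v i) = ∑ i, c i • B (v i) := by
    rw [map_sum]
    refine Finset.sum_congr rfl fun i _ => ?_
    rw [_root_.map_smul]
  rw [h2, LinearMap.sum_apply]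
  refine Finset.sum_congr rfl fun i _ => ?_
  rw [LinearMap.smul_apply, smul_eq_mul, h1, mul_assoc]

lemma negIndexOn_eq_card [FiniteDimensional ℝ V]
    (B : V →ₗ[ℝ] V →ₗ[ℝ] ℝ) {ι : Type*} [Fintype ι] (e : ι → V)
    (he : LinearIndependent ℝ e)
    (horth : ∀ i j, i ≠ j → B (e i) (e j) = 0)
    (W : Submodule ℝ V) (hspan : Submodule.span ℝ (Set.range e) = W) :
    negIndexOn W (fun x => B x x)
      = (Finset.univ.filter (fun j => B (e j) (e j) < 0)).card := by
  classical
  set N := Finset.univ.filter (fun j => B (e j) (e j) < 0) with hN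
  have heW : ∀ j, e j ∈ W := by
    intro j
    rw [← hspan]
    exact Submodule.subset_span ⟨j, rfl⟩
  have key : ∀ (p : ι → Prop) [DecidablePred p],
      ∀ x ∈ Submodule.span ℝ (Set.range (e ∘ (Subtype.val : {j // p j} → ι))),
      ∃ c : {j // p j} → ℝ, x = ∑ j, c j • e j.1 ∧
        B x x = ∑ j : {j // p j}, c j * c j * B (e j.1) (e j.1) := by
    intro p _ x hx
    obtain ⟨c, hc⟩ := (Submodule.mem_span_range_iff_exists_fun ℝ).mp hx
    refine ⟨c, hc.symm, ?_⟩
    rw [← hc]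
    exact quad_sum B _ (fun i j hij => horth i.1 j.1 (fun h => hij (Subtype.ext h))) c
  have hmem : N.card ∈ {d : ℕ | ∃ U : Submodule ℝ V, U ≤ W ∧ Module.finrank ℝ U = d ∧
      ∀ x ∈ U, x ≠ 0 → (fun x => B x x) x < 0} := by
    refine ⟨Submodule.span ℝ (Set.range (e ∘ (Subtype.val : {j // j ∈ N} → ι))),
      ?_, ?_, ?_⟩
    · rw [Submodule.span_le]
      rintro _ ⟨j, rfl⟩
      exact heW j.1
    · rw [finrank_span_eq_card (he.comp _ Subtype.val_injective)]
      simp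
    · intro x hx hx0
      show B x x < 0
      obtain ⟨c, hcx, hq⟩ := key (fun j => j ∈ N) x hx
      have hc0 : ∃ j, c j ≠ 0 := by
        by_contra h
        push_neg at h
        apply hx0
        rw [hcx]
        simp [h]
      obtain ⟨j0, hj0⟩ := hc0
      rw [hq]
      have hterm : ∀ j : {j // j ∈ N}, c j * c j * B (e j.1) (e j.1) ≤ 0 := by
        intro j
        have hneg : B (e j.1) (e j.1) < 0 := (Finset.mem_filter.mp j.2).2
        nlinarith [mul_self_nonneg (c j)]
      have hneg : B (e j0.1) (e j0.1) < 0 := (Finset.mem_filter.mp j0.2).2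
      rcases lt_or_eq_of_le (Finset.sum_nonpos (fun j _ => hterm j)) with h | h
      · exact h
      · exfalso
        have h0 := (Finset.sum_eq_zero_iff_of_nonpos (fun j _ => hterm j)).mp h
          j0 (by simp)
        nlinarith [mul_self_pos.mpr hj0]
  have hub : ∀ d ∈ {d : ℕ | ∃ U : Submodule ℝ V, U ≤ W ∧ Module.finrank ℝ U = d ∧
      ∀ x ∈ U, x ≠ 0 → (fun x => B x x) x < 0}, d ≤ N.card := by
    rintro d ⟨U, hUW, hUd, hUneg⟩
    set P := Submodule.span ℝ (Set.range (e ∘ (Subtype.val : {j // j ∉ N} → ι)))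
      with hP
    have hPW : P ≤ W := by
      rw [hP, Submodule.span_le]
      rintro _ ⟨j, rfl⟩
      exact heW j.1
    have hPpos : ∀ x ∈ P, 0 ≤ B x x := by
      intro x hx
      obtain ⟨c, _, hq⟩ := key (fun j => j ∉ N) x hx
      rw [hq]
      refine Finset.sum_nonneg fun j _ => ?_
      have hge : ¬ B (e j.1) (e j.1) < 0 := fun hlt =>
        j.2 (Finset.mem_filter.mpr ⟨Finset.mem_univ _, hlt⟩)
      nlinarith [mul_self_nonneg (c j), le_of_not_gt hge]
    have hinf : U ⊓ P = ⊥ := by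
      rw [Submodule.eq_bot_iff]
      intro x hx
      by_contra hx0
      exact absurd (hPpos x hx.2) (not_le.mpr (hUneg x hx.1 hx0))
    have hPrank : Module.finrank ℝ P = Fintype.card ι - N.card := by
      rw [hP, finrank_span_eq_card (he.comp _ Subtype.val_injective),
        Fintype.card_subtype_compl]
      simp
    have hWrank : Module.finrank ℝ W = Fintype.card ι := by
      rw [← hspan, finrank_span_eq_card he]
    have hsum := Submodule.finrank_sup_add_finrank_inf_eq U P
    rw [hinf] at hsum
    have hle : Module.finrank ℝ ↥(U ⊔ P) ≤ Fintype.card ι := by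
      rw [← hWrank]
      exact Submodule.finrank_mono (sup_le hUW hPW)
    have hNle : N.card ≤ Fintype.card ι := by
      have := Finset.card_filter_le (Finset.univ : Finset ι)
        (fun j => B (e j) (e j) < 0)
      simpa using this
    simp only [finrank_bot, add_zero] at hsum
    omega
  have hbdd : BddAbove {d : ℕ | ∃ U : Submodule ℝ V, U ≤ W ∧ Module.finrank ℝ U = d ∧
      ∀ x ∈ U, x ≠ 0 → (fun x => B x x) x < 0} := ⟨N.card, hub⟩
  exact le_antisymm (csSup_le ⟨N.card, hmem⟩ hub) (le_csSup hbdd hmem)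

end Helpers

section MatrixHelpers

open Module

lemma symm_dot {k : ℕ} (Q : Matrix (Fin k) (Fin k) ℝ) (hQ : Qᵀ = Q) (x y : Fin k → ℝ) :
    x ⬝ᵥ Q *ᵥ y = y ⬝ᵥ Q *ᵥ x := by
  rw [dotProduct_mulVec, ← vecMul_transpose, hQ, dotProduct_comm]

lemma sum_mulVec' {k : ℕ} {ι : Type*} (s : Finset ι) (M : ι → Matrix (Fin k) (Fin k) ℝ)
    (v : Fin k → ℝ) : (∑ i ∈ s, M i) *ᵥ v = ∑ i ∈ s, M i *ᵥ v :=
  map_sum (Matrix.mulVec.addMonoidHomLeft v) M s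

lemma sum_dotProduct' {k : ℕ} {ι : Type*} (s : Finset ι) (v : ι → Fin k → ℝ)
    (w : Fin k → ℝ) : (∑ i ∈ s, v i) ⬝ᵥ w = ∑ i ∈ s, v i ⬝ᵥ w := by
  simp only [dotProduct, Finset.sum_apply, Finset.sum_mul]
  exact Finset.sum_comm

/-- the bilinear form of a matrix -/
noncomputable def matBilin {k : ℕ} (Q : Matrix (Fin k) (Fin k) ℝ) :
    (Fin k → ℝ) →ₗ[ℝ] (Fin k → ℝ) →ₗ[ℝ] ℝ :=
  LinearMap.mk₂ ℝ (fun x y => x ⬝ᵥ Q *ᵥ y)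
    (fun x x' y => by rw [add_dotProduct])
    (fun c x y => by rw [smul_dotProduct])
    (fun x y y' => by rw [mulVec_add, dotProduct_add])
    (fun c x y => by rw [mulVec_smul, dotProduct_smul])

@[simp] lemma matBilin_apply {k : ℕ} (Q : Matrix (Fin k) (Fin k) ℝ) (x y : Fin k → ℝ) :
    matBilin Q x y = x ⬝ᵥ Q *ᵥ y := rfl

lemma matIndex_eq_card {k : ℕ} (Q : Matrix (Fin k) (Fin k) ℝ) (hQ : Qᵀ = Q) :
    ∃ b : Basis (Fin (finrank ℝ (Fin k → ℝ))) ℝ (Fin k → ℝ),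
      (∀ i j, i ≠ j → b i ⬝ᵥ Q *ᵥ b j = 0) ∧
      matIndex Q = (Finset.univ.filter (fun j => b j ⬝ᵥ Q *ᵥ b j < 0)).card := by
  have hsymm : (matBilin Q).IsSymm := ⟨fun x y => by
    simp only [RingHom.id_apply, matBilin_apply]
    exact symm_dot Q hQ x y⟩
  obtain ⟨b, hb⟩ := LinearMap.BilinForm.exists_orthogonal_basis hsymm
  refine ⟨b, fun i j hij => LinearMap.isOrthoᵢ_def.mp hb i j hij, ?_⟩
  have := negIndexOn_eq_card (matBilin Q) b b.linearIndependent
    (fun i j hij => LinearMap.isOrthoᵢ_def.mp hb i j hij) ⊤ b.span_eq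
  refine Eq.trans this ?_
  convert rfl <;> rfl

/-- the bilinear form `χ` on block vectors -/
noncomputable def bigBilin {n k : ℕ} (G : Fin n → Matrix (Fin k) (Fin k) ℝ) :
    (Fin n → Fin k → ℝ) →ₗ[ℝ] (Fin n → Fin k → ℝ) →ₗ[ℝ] ℝ :=
  LinearMap.mk₂ ℝ (fun μ ν => ∑ i, μ i ⬝ᵥ (G i *ᵥ ν i))
    (fun μ μ' ν => by
      simp only [Pi.add_apply, add_dotProduct, Finset.sum_add_distrib])
    (fun c μ ν => by
      simp only [Pi.smul_apply, smul_dotProduct, Finset.smul_sum])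
    (fun μ ν ν' => by
      simp only [Pi.add_apply, mulVec_add, dotProduct_add, Finset.sum_add_distrib])
    (fun c μ ν => by
      simp only [Pi.smul_apply, mulVec_smul, dotProduct_smul, Finset.smul_sum])

@[simp] lemma bigBilin_apply {n k : ℕ} (G : Fin n → Matrix (Fin k) (Fin k) ℝ)
    (μ ν : Fin n → Fin k → ℝ) :
    bigBilin G μ ν = ∑ i, μ i ⬝ᵥ (G i *ᵥ ν i) := rfl

end MatrixHelpers

/-- The restriction of `χ(μ) = Σ_i μ_iᵀ G_i μ_i` to `Θ` is nondegenerate, and its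
index equals `Σ_i ind(G_i) - ind(Ḡ)` where `Ḡ = Σ_i G_i⁻¹`. -/
theorem index_on_theta (n k : ℕ) (hn : 1 ≤ n) (hk : 1 ≤ k)
    (G : Fin n → Matrix (Fin k) (Fin k) ℝ)
    (hGsym : ∀ i, (G i)ᵀ = G i) (hGinv : ∀ i, IsUnit (G i).det)
    (hGbar : IsUnit (∑ i : Fin n, (G i)⁻¹).det) :
    (∀ μ ∈ thetaSub n k,
      (∀ ν ∈ thetaSub n k, (∑ i : Fin n, μ i ⬝ᵥ (G i *ᵥ ν i)) = 0) → μ = 0) ∧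
    (negIndexOn (thetaSub n k) (fun μ => ∑ i : Fin n, μ i ⬝ᵥ (G i *ᵥ μ i)) : ℤ)
      = (∑ i : Fin n, (matIndex (G i) : ℤ)) - (matIndex (∑ i : Fin n, (G i)⁻¹) : ℤ) := by
  classical
  set Gbar := ∑ i : Fin n, (G i)⁻¹ with hGbarDef
  set B := bigBilin G with hBdef
  have hBapp : ∀ μ ν, B μ ν = ∑ i, μ i ⬝ᵥ (G i *ᵥ ν i) := fun μ ν => rfl
  have hsym : ∀ μ ν, B μ ν = B ν μ := by
    intro μ ν
    rw [hBapp, hBapp]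
    exact Finset.sum_congr rfl fun i _ => symm_dot _ (hGsym i) _ _
  have hGbarSym : Gbarᵀ = Gbar := by
    rw [hGbarDef, Matrix.transpose_sum]
    refine Finset.sum_congr rfl fun i _ => ?_
    rw [Matrix.transpose_nonsing_inv, hGsym i]
  have hGinv' : ∀ i, G i * (G i)⁻¹ = 1 := fun i => Matrix.mul_nonsing_inv _ (hGinv i)
  have hGbarInv : Gbar * Gbar⁻¹ = 1 := Matrix.mul_nonsing_inv _ hGbar
  have hGbarInv' : Gbar⁻¹ * Gbar = 1 := Matrix.nonsing_inv_mul _ hGbar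
  set L : (Fin k → ℝ) →ₗ[ℝ] (Fin n → Fin k → ℝ) :=
    LinearMap.pi (fun i => ((G i)⁻¹).mulVecLin) with hLdef
  have hLapp : ∀ c i, L c i = (G i)⁻¹ *ᵥ c := fun _ _ => rfl
  have hsumL : ∀ c, ∑ i, L c i = Gbar *ᵥ c := by
    intro c
    rw [hGbarDef, sum_mulVec']
    rfl
  have hLinj : Function.Injective L := by
    intro c c' h
    have h0 := congrArg (fun μ : Fin n → Fin k → ℝ => G ⟨0, hn⟩ *ᵥ μ ⟨0, hn⟩) h
    simpa [hLapp, mulVec_mulVec, hGinv', one_mulVec] using h0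
  have hBL : ∀ μ c, B μ (L c) = (∑ i, μ i) ⬝ᵥ c := by
    intro μ c
    rw [hBapp, sum_dotProduct']
    refine Finset.sum_congr rfl fun i _ => ?_
    rw [hLapp, mulVec_mulVec, hGinv' i, one_mulVec]
  have hThetaL : ∀ μ ∈ thetaSub n k, ∀ c, B μ (L c) = 0 := by
    intro μ hμ c
    have hμ' : ∑ i, μ i = 0 := hμ
    rw [hBL, hμ', zero_dotProduct]
  have hLL : ∀ c c', B (L c) (L c') = c ⬝ᵥ Gbar *ᵥ c' := by
    intro c c'
    rw [hBL, hsumL, dotProduct_comm, symm_dot Gbar hGbarSym]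
  have hdecompTheta : ∀ μ : Fin n → Fin k → ℝ,
      μ - L (Gbar⁻¹ *ᵥ ∑ i, μ i) ∈ thetaSub n k := by
    intro μ
    show ∑ i, (μ - L (Gbar⁻¹ *ᵥ ∑ i, μ i)) i = 0
    simp only [Pi.sub_apply]
    rw [Finset.sum_sub_distrib, hsumL, mulVec_mulVec, hGbarInv, one_mulVec, sub_self]
  constructor
  · -- nondegeneracy
    intro μ hμ hall
    have hBall : ∀ ν, B μ ν = 0 := by
      intro ν
      have hsplit : ν = (ν - L (Gbar⁻¹ *ᵥ ∑ i, ν i)) + L (Gbar⁻¹ *ᵥ ∑ i, ν i) := by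
        abel
      have h1 : B μ (ν - L (Gbar⁻¹ *ᵥ ∑ i, ν i)) = 0 := by
        rw [hBapp]
        exact hall _ (hdecompTheta ν)
      have h2 : B μ (L (Gbar⁻¹ *ᵥ ∑ i, ν i)) = 0 := hThetaL μ hμ _
      rw [hsplit, map_add, h1, h2, add_zero]
    funext i
    have h1 : ∀ w, μ i ⬝ᵥ (G i *ᵥ w) = 0 := by
      intro w
      have h := hBall (Pi.single i w)
      rw [hBapp, Finset.sum_eq_single i] at h
      · simpa using h
      · intro l _ hl
        simp [Pi.single_eq_of_ne hl]
      · simp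
    have h2 := h1 ((G i)⁻¹ *ᵥ μ i)
    rw [mulVec_mulVec, hGinv' i, one_mulVec, dotProduct_self_eq_zero] at h2
    simpa using h2
  · -- index formula
    set k' := Module.finrank ℝ (Fin k → ℝ) with hk'
    choose bG hbGorth hbGcard using fun i => matIndex_eq_card (G i) (hGsym i)
    obtain ⟨bbar, hbarorth, hbarcard⟩ := matIndex_eq_card Gbar hGbarSym
    -- block family for ⊤
    have hBsingle : ∀ (i i' : Fin n) (x y : Fin k → ℝ),
        B (Pi.single i x) (Pi.single i' y) = if i = i' then x ⬝ᵥ G i *ᵥ y else 0 := by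
      intro i i' x y
      rw [hBapp]
      by_cases h : i = i'
      · subst h
        rw [Finset.sum_eq_single i, if_pos rfl]
        · simp
        · intro l _ hl
          simp [Pi.single_eq_of_ne hl]
        · simp
      · rw [if_neg h]
        refine Finset.sum_eq_zero fun l _ => ?_
        by_cases hl : l = i
        · subst hl
          have h0 : (Pi.single i' y : Fin n → Fin k → ℝ) l = 0 :=
            Pi.single_eq_of_ne (M := fun _ : Fin n => Fin k → ℝ) h y
          rw [h0]
          simp
        · have h0 : (Pi.single i x : Fin n → Fin k → ℝ) l = 0 :=
            Pi.single_eq_of_ne (M := fun _ : Fin n => Fin k → ℝ) hl x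
          rw [h0]
          simp
    have horthbig : ∀ p q : (Σ _i : Fin n, Fin k'), p ≠ q →
        B (Pi.basis bG p) (Pi.basis bG q) = 0 := by
      rintro ⟨i, j⟩ ⟨i', j'⟩ hpq
      rw [Pi.basis_apply, Pi.basis_apply, hBsingle]
      by_cases h : i = i'
      · subst h
        rw [if_pos rfl]
        exact hbGorth i j j' (fun hjj => hpq (by subst hjj; rfl))
      · rw [if_neg h]
    have htopcard := negIndexOn_eq_card B _ (Pi.basis bG).linearIndependent horthbig ⊤
      (Pi.basis bG).span_eq
    have htop : negIndexOn (⊤ : Submodule ℝ (Fin n → Fin k → ℝ)) (fun x => B x x)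
        = ∑ i, matIndex (G i) := by
      rw [htopcard, Finset.card_filter, ← Finset.univ_sigma_univ, Finset.sum_sigma]
      refine Finset.sum_congr rfl fun i _ => ?_
      rw [hbGcard i, Finset.card_filter]
      refine Finset.sum_congr rfl fun j _ => ?_
      have hq : B (Pi.basis bG ⟨i, j⟩) (Pi.basis bG ⟨i, j⟩) = bG i j ⬝ᵥ G i *ᵥ bG i j := by
        rw [Pi.basis_apply, hBsingle, if_pos rfl]
      rw [hq]
    -- Θ family
    have hsymmB : B.IsSymm := ⟨fun x y => by simpa using hsym x y⟩
    obtain ⟨t, ht⟩ := LinearMap.BilinForm.exists_orthogonal_basis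
      (hsymmB.domRestrict (thetaSub n k))
    set eT : Fin (Module.finrank ℝ ↥(thetaSub n k)) → (Fin n → Fin k → ℝ) :=
      fun j => ((t j : ↥(thetaSub n k)) : Fin n → Fin k → ℝ) with heTdef
    have heT : LinearIndependent ℝ eT :=
      t.linearIndependent.map' (thetaSub n k).subtype (Submodule.ker_subtype _)
    have hspanT : Submodule.span ℝ (Set.range eT) = thetaSub n k := by
      have hr : Set.range eT = (thetaSub n k).subtype '' Set.range t := by
        rw [← Set.range_comp]
        rfl
      rw [hr, Submodule.span_image, t.span_eq, Submodule.map_top, Submodule.range_subtype]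
    have horthT : ∀ i j, i ≠ j → B (eT i) (eT j) = 0 := by
      intro i j hij
      have h := LinearMap.isOrthoᵢ_def.mp ht i j hij
      rwa [LinearMap.domRestrict₁₂_apply] at h
    have hTcard := negIndexOn_eq_card B eT heT horthT (thetaSub n k) hspanT
    -- W family
    set eW : Fin k' → (Fin n → Fin k → ℝ) := fun j => L (bbar j) with heWdef
    have heW : LinearIndependent ℝ eW :=
      bbar.linearIndependent.map' L (LinearMap.ker_eq_bot.mpr hLinj)
    have hspanW : Submodule.span ℝ (Set.range eW) = LinearMap.range L := by
      have hr : Set.range eW = L '' Set.range bbar := by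
        rw [← Set.range_comp]
        rfl
      rw [hr, Submodule.span_image, bbar.span_eq, Submodule.map_top]
    have hdisj : Disjoint (thetaSub n k) (LinearMap.range L) := by
      rw [Submodule.disjoint_def]
      rintro μ hμ ⟨c, rfl⟩
      have h0 : Gbar *ᵥ c = 0 := by
        rw [← hsumL]
        exact hμ
      have hc : c = 0 := by
        have h1 := congrArg (fun v => Gbar⁻¹ *ᵥ v) h0
        simpa [mulVec_mulVec, hGbarInv', one_mulVec] using h1
      rw [hc, map_zero]
    have hsum_top : thetaSub n k ⊔ LinearMap.range L = ⊤ := by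
      rw [eq_top_iff]
      intro μ _
      rw [Submodule.mem_sup]
      exact ⟨μ - L (Gbar⁻¹ *ᵥ ∑ i, μ i), hdecompTheta μ,
        L (Gbar⁻¹ *ᵥ ∑ i, μ i), LinearMap.mem_range_self _ _, by abel⟩
    have hindep : LinearIndependent ℝ (Sum.elim eT eW) :=
      heT.sum_type heW (by rw [hspanT, hspanW]; exact hdisj)
    have hspanSum : Submodule.span ℝ (Set.range (Sum.elim eT eW)) = ⊤ := by
      rw [Set.Sum.elim_range, Submodule.span_union, hspanT, hspanW, hsum_top]
    have horthSum : ∀ p q, p ≠ q → B (Sum.elim eT eW p) (Sum.elim eT eW q) = 0 := by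
      rintro (i | i) (j | j) hpq
      · exact horthT i j (fun h => hpq (by rw [h]))
      · exact hThetaL _ (t i).2 _
      · rw [Sum.elim_inr, Sum.elim_inl, hsym]
        exact hThetaL _ (t j).2 _
      · rw [Sum.elim_inr, Sum.elim_inr, heWdef]
        show B (L (bbar i)) (L (bbar j)) = 0
        rw [hLL]
        exact hbarorth i j (fun h => hpq (by rw [h]))
    have htop2 := negIndexOn_eq_card B (Sum.elim eT eW) hindep horthSum ⊤ hspanSum
    have hcount2 : (Finset.univ.filter
          (fun p => B (Sum.elim eT eW p) (Sum.elim eT eW p) < 0)).card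
        = (Finset.univ.filter (fun j => B (eT j) (eT j) < 0)).card + matIndex Gbar := by
      rw [Finset.card_filter, Fintype.sum_sum_type]
      congr 1
      · rw [Finset.card_filter]
        simp only [Sum.elim_inl]
        convert rfl <;> rfl
      · rw [hbarcard, Finset.card_filter]
        refine Finset.sum_congr rfl fun j _ => ?_
        have hq : B (Sum.elim eT eW (Sum.inr j)) (Sum.elim eT eW (Sum.inr j))
            = bbar j ⬝ᵥ Gbar *ᵥ bbar j := by
          rw [Sum.elim_inr, heWdef]
          exact hLL _ _
        rw [hq]
    have hNat : ∑ i, matIndex (G i)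
        = negIndexOn (thetaSub n k) (fun x => B x x) + matIndex Gbar := by
      rw [← htop, htop2, hcount2, hTcard]
    have hfun : (fun μ : Fin n → Fin k → ℝ => ∑ i, μ i ⬝ᵥ (G i *ᵥ μ i))
        = fun x => B x x := rfl
    rw [hfun]
    have hcast := congrArg (Nat.cast : ℕ → ℤ) hNat
    push_cast at hcast
    linarith [hcast]
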